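/- Let a > 0, let w(x) = e^{−a} a^x / x! be the Poisson weight on ℕ, and let (Ĉ_n)_{n≥0}, Ĉ_n : ℕ → ℝ, be the family determined by Ĉ_0(x) = 1, Ĉ_1(x) = (a − x)/√a, and Ĉ_{n+1}(x) = ((n + a − x)/√(a(n+1)))·Ĉ_n(x) − √(n/(n+1))·Ĉ_{n−1}(x) for n ≥ 1. Then for all n, m ∈ ℕ the series Σ_{x=0}^∞ Ĉ_n(x)·Ĉ_m(x)·w(x) converges and equals 1 if n = m and 0 if n ≠ m. -/

import Mathlib

open scoped BigOperators
open Finset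

namespace CharlierAux


noncomputable def cc (a : ℝ) (n x : ℕ) : ℝ :=
  ∑ k ∈ Finset.range (n+1), (n.choose k : ℝ) * (-a)^(n-k) * (x.descFactorial k : ℝ)

lemma cc_at0 (a : ℝ) (n : ℕ) : cc a n 0 = (-a)^n := by
  unfold cc
  rw [Finset.sum_eq_single 0]
  · simp
  · intro k hk hk0
    obtain ⟨j, rfl⟩ := Nat.exists_eq_succ_of_ne_zero hk0
    simp [Nat.zero_descFactorial_succ]
  · intro h; simp at h

lemma cc_zero (a : ℝ) (x : ℕ) : cc a 0 x = 1 := by simp [cc]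

lemma cc_one (a : ℝ) (x : ℕ) : cc a 1 x = (x : ℝ) - a := by
  simp [cc, Finset.sum_range_succ]; ring

lemma desc_succ_real (y k : ℕ) :
    (((y+1).descFactorial (k+1) : ℕ) : ℝ)
      = (y.descFactorial (k+1) : ℝ) + ((k:ℝ)+1) * (y.descFactorial k : ℝ) := by
  rcases le_or_gt k y with h | h
  · have h1 : (y+1).descFactorial (k+1) = (y+1) * y.descFactorial k :=
      Nat.succ_descFactorial_succ y k
    have h2 : y.descFactorial (k+1) = (y - k) * y.descFactorial k :=
      Nat.descFactorial_succ y k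
    rw [h1, h2]
    push_cast [h]
    ring
  · have h1 : y.descFactorial k = 0 := (Nat.descFactorial_eq_zero_iff_lt).2 h
    have h2 : y.descFactorial (k+1) = 0 := (Nat.descFactorial_eq_zero_iff_lt).2 (by omega)
    have h3 : (y+1).descFactorial (k+1) = (y+1) * y.descFactorial k :=
      Nat.succ_descFactorial_succ y k
    rw [h3, h1, h2]
    simp

lemma cc_raise (a : ℝ) (n x : ℕ) :
    cc a (n+1) x = (x : ℝ) * cc a n (x-1) - a * cc a n x := by
  rcases x with _ | y
  · rw [cc_at0, cc_at0]
    push_cast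
    ring
  · have hd : ∀ k, (((y+1).descFactorial (k+1) : ℕ) : ℝ) = ((y:ℝ)+1) * (y.descFactorial k : ℝ) := by
      intro k; rw [Nat.succ_descFactorial_succ]; push_cast; ring
    set B : ℝ := ∑ k ∈ Finset.range n,
      (n.choose (k+1) : ℝ) * (-a)^(n-k) * (((y:ℝ)+1) * (y.descFactorial k : ℝ)) with hBdef
    have h1 : cc a (n+1) (y+1) = ((y:ℝ)+1) * cc a n y + B + (-a)^(n+1) := by
      unfold cc
      rw [Finset.sum_range_succ' _ (n+1)]
      have hL : ∀ k ∈ Finset.range (n+1),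
          ((n+1).choose (k+1) : ℝ) * (-a)^(n+1-(k+1)) * ((y+1).descFactorial (k+1) : ℝ)
          = (n.choose k : ℝ) * (-a)^(n-k) * (((y:ℝ)+1) * (y.descFactorial k : ℝ))
            + (n.choose (k+1) : ℝ) * (-a)^(n-k) * (((y:ℝ)+1) * (y.descFactorial k : ℝ)) := by
        intro k hk
        rw [Nat.succ_sub_succ, hd, Nat.choose_succ_succ']
        push_cast
        ring
      rw [Finset.sum_congr rfl hL, Finset.sum_add_distrib]
      have hA : ∑ k ∈ Finset.range (n+1),
          (n.choose k : ℝ) * (-a)^(n-k) * (((y:ℝ)+1) * (y.descFactorial k : ℝ))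
          = ((y:ℝ)+1) * ∑ k ∈ Finset.range (n+1),
              (n.choose k : ℝ) * (-a)^(n-k) * (y.descFactorial k : ℝ) := by
        rw [Finset.mul_sum]
        exact Finset.sum_congr rfl fun k _ => by ring
      have hBtop : ∑ k ∈ Finset.range (n+1),
          (n.choose (k+1) : ℝ) * (-a)^(n-k) * (((y:ℝ)+1) * (y.descFactorial k : ℝ)) = B := by
        rw [Finset.sum_range_succ]
        simp [hBdef]
      rw [hA, hBtop]
      simp
    have h2 : (-a) * cc a n (y+1) = B + (-a)^(n+1) := by
      unfold cc
      rw [Finset.sum_range_succ' _ n, mul_add, Finset.mul_sum]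
      have : ∀ k ∈ Finset.range n,
          (-a) * ((n.choose (k+1) : ℝ) * (-a)^(n-(k+1)) * ((y+1).descFactorial (k+1) : ℝ))
          = (n.choose (k+1) : ℝ) * (-a)^(n-k) * (((y:ℝ)+1) * (y.descFactorial k : ℝ)) := by
        intro k hk
        rw [Finset.mem_range] at hk
        have hnk : n - k = (n - (k+1)) + 1 := by omega
        rw [hd, hnk, pow_succ]
        ring
      rw [Finset.sum_congr rfl this]
      simp [hBdef, pow_succ]
      ring
    have hsub : (y+1) - 1 = y := rfl
    rw [hsub, h1]
    push_cast
    linarith [h2]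


lemma cc_delta (a : ℝ) (n x : ℕ) :
    cc a (n+1) (x+1) = cc a (n+1) x + ((n:ℝ)+1) * cc a n x := by
  unfold cc
  rw [Finset.sum_range_succ' _ (n+1)]
  have hL : ∀ k ∈ Finset.range (n+1),
      ((n+1).choose (k+1) : ℝ) * (-a)^(n+1-(k+1)) * ((x+1).descFactorial (k+1) : ℝ)
      = ((n+1).choose (k+1) : ℝ) * (-a)^(n-k) * (x.descFactorial (k+1) : ℝ)
        + ((n:ℝ)+1) * ((n.choose k : ℝ) * (-a)^(n-k) * (x.descFactorial k : ℝ)) := by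
    intro k hk
    rw [Nat.succ_sub_succ, desc_succ_real]
    have hc : ((n:ℝ)+1) * (n.choose k : ℝ) = ((n+1).choose (k+1) : ℝ) * ((k:ℝ)+1) := by
      have := Nat.add_one_mul_choose_eq n k
      exact_mod_cast congrArg (Nat.cast (R := ℝ)) this
    push_cast at hc ⊢
    linear_combination (-((-a)^(n-k) * (x.descFactorial k : ℝ))) * hc
  rw [Finset.sum_congr rfl hL, Finset.sum_add_distrib]
  rw [Finset.sum_range_succ' (fun k => ((n+1).choose k : ℝ) * (-a)^(n+1-k) * (x.descFactorial k : ℝ)) (n+1)]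
  simp only [Nat.succ_sub_succ, Nat.choose_zero_right, Nat.descFactorial_zero, Nat.sub_zero,
    Nat.cast_one]
  rw [← Finset.mul_sum]
  ring

lemma cc_rec (a : ℝ) (n : ℕ) (hn : 1 ≤ n) (x : ℕ) :
    cc a (n+1) x = ((x:ℝ) - n - a) * cc a n x - a * n * cc a (n-1) x := by
  obtain ⟨p, rfl⟩ : ∃ p, n = p + 1 := ⟨n - 1, by omega⟩
  simp only [Nat.add_sub_cancel]
  rcases x with _ | y
  · rw [cc_at0, cc_at0, cc_at0]
    rw [pow_succ (-a) (p+1), pow_succ (-a) p]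
    push_cast
    ring
  · have h1 := cc_raise a (p+1) (y+1)
    have h2 := cc_delta a p (y+1)
    have h3 := cc_raise a p (y+1)
    have hsub : (y+1) - 1 = y := rfl
    rw [hsub] at h1 h3
    -- h2 : cc a (p+1) (y+1+? ) careful
    have h2' := cc_delta a p y
    push_cast at h1 h2' h3 ⊢
    linear_combination h1 - ((y:ℝ)+1) * h2' + ((p:ℝ)+1) * h3

lemma cc_bound (a : ℝ) (ha : 0 ≤ a) (n x : ℕ) : |cc a n x| ≤ ((x:ℝ) + a)^n := by
  have h1 : |cc a n x| ≤ ∑ k ∈ Finset.range (n+1),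
      (n.choose k : ℝ) * a^(n-k) * ((x:ℝ)^k) := by
    refine (Finset.abs_sum_le_sum_abs _ _).trans (Finset.sum_le_sum fun k hk => ?_)
    rw [abs_mul, abs_mul, abs_pow, abs_neg, abs_of_nonneg ha,
      abs_of_nonneg (by positivity : (0:ℝ) ≤ (n.choose k : ℝ)),
      abs_of_nonneg (by positivity : (0:ℝ) ≤ (x.descFactorial k : ℝ))]
    have hle : (x.descFactorial k : ℝ) ≤ (x:ℝ)^k := by
      exact_mod_cast Nat.descFactorial_le_pow x k
    exact mul_le_mul_of_nonneg_left hle (by positivity)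
  calc |cc a n x| ≤ _ := h1
    _ = ((x:ℝ) + a)^n := by
        rw [add_pow]
        exact Finset.sum_congr rfl fun k hk => by ring


noncomputable def ww (a : ℝ) (x : ℕ) : ℝ := Real.exp (-a) * a ^ x / x.factorial

lemma tsum_exp (b : ℝ) : ∑' x : ℕ, b^x / x.factorial = Real.exp b := by
  rw [Real.exp_eq_exp_ℝ, NormedSpace.exp_eq_tsum_div]

lemma summable_exp (b : ℝ) : Summable (fun x : ℕ => b^x / x.factorial) :=
  Real.summable_pow_div_factorial b

lemma pow_div_fact_le (b : ℝ) (hb : 0 ≤ b) (x : ℕ) : b^x / x.factorial ≤ Real.exp b := by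
  rw [← tsum_exp b]
  exact Summable.le_tsum (summable_exp b) x (fun j _ => by positivity)

lemma summable_polyw (a : ℝ) (ha : 0 < a) (N : ℕ) (b : ℝ) (hb : 0 ≤ b) :
    Summable (fun x : ℕ => ((x:ℝ)+b)^N * (a^x / x.factorial)) := by
  have hsum : Summable (fun x : ℕ =>
      (Real.exp (2*a) * 2^N) * (((x:ℝ)^N + b^N) * (1/2:ℝ)^x)) := by
    apply Summable.mul_left
    have h1 : Summable (fun x : ℕ => (x:ℝ)^N * (1/2:ℝ)^x) := by
      have := summable_pow_mul_geometric_of_norm_lt_one (R := ℝ) N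
        (r := (1/2:ℝ)) (by rw [Real.norm_eq_abs, abs_of_pos] <;> norm_num)
      exact this
    have h2 : Summable (fun x : ℕ => b^N * (1/2:ℝ)^x) :=
      (summable_geometric_of_lt_one (by norm_num) (by norm_num)).mul_left _
    have := h1.add h2
    refine this.congr fun x => by ring
  refine Summable.of_nonneg_of_le (fun x => by positivity) (fun x => ?_) hsum
  have hxb : ((x:ℝ)+b)^N ≤ 2^N * ((x:ℝ)^N + b^N) := by
    have h1 : ((x:ℝ)+b) ≤ 2 * max (x:ℝ) b := by
      rcases le_total (x:ℝ) b with h | h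
      · rw [max_eq_right h]; linarith
      · rw [max_eq_left h]; linarith
    calc ((x:ℝ)+b)^N ≤ (2 * max (x:ℝ) b)^N := by
          apply pow_le_pow_left₀ (by positivity) h1
      _ = 2^N * (max (x:ℝ) b)^N := by rw [mul_pow]
      _ ≤ 2^N * ((x:ℝ)^N + b^N) := by
          apply mul_le_mul_of_nonneg_left _ (by positivity)
          rcases le_total (x:ℝ) b with h | h
          · rw [max_eq_right h]
            nlinarith [pow_nonneg (show (0:ℝ) ≤ (x:ℝ) by positivity) N]
          · rw [max_eq_left h]
            nlinarith [pow_nonneg hb N]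
  have hax : a^x / x.factorial ≤ Real.exp (2*a) * (1/2:ℝ)^x := by
    have : a^x = (1/2:ℝ)^x * (2*a)^x := by
      rw [mul_pow, ← mul_assoc, ← mul_pow]; norm_num
    rw [this]
    have h2 := pow_div_fact_le (2*a) (by linarith) x
    calc (1/2:ℝ)^x * (2*a)^x / x.factorial = (1/2:ℝ)^x * ((2*a)^x / x.factorial) := by ring
      _ ≤ (1/2:ℝ)^x * Real.exp (2*a) := by
          apply mul_le_mul_of_nonneg_left h2 (by positivity)
      _ = Real.exp (2*a) * (1/2:ℝ)^x := by ring
  calc ((x:ℝ)+b)^N * (a^x / x.factorial)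
      ≤ (2^N * ((x:ℝ)^N + b^N)) * (Real.exp (2*a) * (1/2:ℝ)^x) := by
        apply mul_le_mul hxb hax (by positivity) (by positivity)
    _ = (Real.exp (2*a) * 2^N) * (((x:ℝ)^N + b^N) * (1/2:ℝ)^x) := by ring

lemma summable_boundw (a : ℝ) (ha : 0 < a) (N : ℕ) (b : ℝ) (hb : 0 ≤ b) (f : ℕ → ℝ)
    (hf : ∀ x, |f x| ≤ ((x:ℝ)+b)^N) : Summable (fun x : ℕ => f x * ww a x) := by
  have h := (summable_polyw a ha N b hb).mul_left (Real.exp (-a))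
  refine Summable.of_norm_bounded h (fun x => ?_)
  rw [Real.norm_eq_abs, abs_mul, ww]
  have hww : |Real.exp (-a) * a ^ x / x.factorial|
      = Real.exp (-a) * (a^x / x.factorial) := by
    rw [abs_of_nonneg (by positivity)]; ring
  rw [hww]
  calc |f x| * (Real.exp (-a) * (a^x / x.factorial))
      ≤ ((x:ℝ)+b)^N * (Real.exp (-a) * (a^x / x.factorial)) := by
        apply mul_le_mul_of_nonneg_right (hf x) (by positivity)
    _ = Real.exp (-a) * (((x:ℝ)+b)^N * (a^x / x.factorial)) := by ring


lemma desc_fact_mul (x : ℕ) : ∀ j : ℕ, (x+j).descFactorial j * x.factorial = (x+j).factorial := by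
  intro j
  induction j with
  | zero => simp
  | succ p ih =>
      have h1 : (x + (p+1)).descFactorial (p+1) = (x+p+1) * ((x+p).descFactorial p) :=
        Nat.succ_descFactorial_succ (x+p) p
      have h2 : (x + (p+1)).factorial = (x+p+1) * (x+p).factorial :=
        Nat.factorial_succ (x+p)
      rw [h1, h2, Nat.mul_assoc, ih]

lemma summable_momw (a : ℝ) (ha : 0 < a) (j : ℕ) :
    Summable (fun x : ℕ => (x.descFactorial j : ℝ) * ww a x) := by
  refine summable_boundw a ha j 1 (by norm_num) _ (fun x => ?_)
  rw [abs_of_nonneg (by positivity)]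
  calc (x.descFactorial j : ℝ) ≤ (x:ℝ)^j := by exact_mod_cast Nat.descFactorial_le_pow x j
    _ ≤ ((x:ℝ)+1)^j := by
        apply pow_le_pow_left₀ (by positivity) (by linarith)

lemma tsum_momw (a : ℝ) (ha : 0 < a) (j : ℕ) :
    ∑' x : ℕ, (x.descFactorial j : ℝ) * ww a x = a^j := by
  have hs := summable_momw a ha j
  rw [← Summable.sum_add_tsum_nat_add j hs]
  have h0 : ∀ i ∈ Finset.range j, (i.descFactorial j : ℝ) * ww a i = 0 := by
    intro i hi
    rw [Finset.mem_range] at hi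
    rw [(Nat.descFactorial_eq_zero_iff_lt).2 hi]
    simp
  rw [Finset.sum_eq_zero h0, zero_add]
  have hsh : ∀ x : ℕ, ((x+j).descFactorial j : ℝ) * ww a (x+j)
      = (Real.exp (-a) * a^j) * (a^x / x.factorial) := by
    intro x
    have hkey : ((x+j).descFactorial j : ℝ) * (x.factorial : ℝ) = ((x+j).factorial : ℝ) := by
      exact_mod_cast congrArg (Nat.cast (R:=ℝ)) (desc_fact_mul x j)
    have hfx : (x.factorial : ℝ) ≠ 0 := by positivity
    have hfxj : ((x+j).factorial : ℝ) ≠ 0 := by positivity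
    rw [ww, pow_add]
    field_simp
    linear_combination hkey
  rw [tsum_congr hsh, tsum_mul_left, tsum_exp a]
  rw [mul_right_comm, ← Real.exp_add]
  simp

lemma summable_ccw (a : ℝ) (ha : 0 < a) (n m : ℕ) :
    Summable (fun x : ℕ => cc a n x * cc a m x * ww a x) := by
  refine summable_boundw a ha (n+m) a (le_of_lt ha) _ (fun x => ?_)
  rw [abs_mul, pow_add]
  exact mul_le_mul (cc_bound a ha.le n x) (cc_bound a ha.le m x) (abs_nonneg _)
    (by positivity)

lemma summable_ccw' (a : ℝ) (ha : 0 < a) (n m : ℕ) :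
    Summable (fun x : ℕ => cc a n x * cc a m (x+1) * ww a x) := by
  refine summable_boundw a ha (n+m) (a+1) (by linarith) _ (fun x => ?_)
  rw [abs_mul, pow_add]
  refine mul_le_mul ((cc_bound a ha.le n x).trans ?_) ((cc_bound a ha.le m (x+1)).trans ?_)
    (abs_nonneg _) (by positivity)
  · apply pow_le_pow_left₀ (by positivity) (by linarith)
  · apply pow_le_pow_left₀ (by positivity) (by push_cast; linarith)

lemma mom0 (a : ℝ) (ha : 0 < a) (k : ℕ) :
    ∑' x : ℕ, cc a k x * ww a x = if k = 0 then 1 else 0 := by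
  have hterm : ∀ x : ℕ, cc a k x * ww a x
      = ∑ j ∈ Finset.range (k+1),
          ((k.choose j : ℝ) * (-a)^(k-j)) * ((x.descFactorial j : ℝ) * ww a x) := by
    intro x
    rw [cc, Finset.sum_mul]
    exact Finset.sum_congr rfl fun j _ => by ring
  rw [tsum_congr hterm, Summable.tsum_finsetSum (fun j _ => ((summable_momw a ha j).mul_left _))]
  have : ∀ j ∈ Finset.range (k+1),
      (∑' x : ℕ, ((k.choose j : ℝ) * (-a)^(k-j)) * ((x.descFactorial j : ℝ) * ww a x))
      = (k.choose j : ℝ) * (-a)^(k-j) * a^j := by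
    intro j _
    rw [tsum_mul_left, tsum_momw a ha j]
  rw [Finset.sum_congr rfl this]
  have hpow := add_pow a (-a) k
  have : ∑ j ∈ Finset.range (k+1), (k.choose j : ℝ) * (-a)^(k-j) * a^j
      = (a + -a)^k := by
    rw [hpow]
    exact Finset.sum_congr rfl fun j _ => by ring
  rw [this]
  simp only [add_neg_cancel]
  rcases Nat.eq_zero_or_pos k with rfl | hk
  · simp
  · rw [zero_pow (by omega), if_neg (by omega)]

lemma ww_shift (a : ℝ) (y : ℕ) : ((y:ℝ)+1) * ww a (y+1) = a * ww a y := by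
  rw [ww, ww, Nat.factorial_succ, pow_succ]
  have h1 : ((y+1) * y.factorial : ℕ) ≠ 0 := by positivity
  push_cast
  field_simp

lemma tsum_step (a : ℝ) (ha : 0 < a) (n m : ℕ) :
    ∑' x : ℕ, cc a (n+1) x * cc a (m+1) x * ww a x
      = a * ((m:ℝ)+1) * ∑' x : ℕ, cc a n x * cc a m x * ww a x := by
  have hG : Summable (fun x : ℕ => ((x:ℝ) * cc a n (x-1)) * cc a (m+1) x * ww a x) := by
    refine summable_boundw a ha (n+m+2) (a+1) (by linarith) _ (fun x => ?_)
    rw [abs_mul, abs_mul]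
    have h1 : |(x:ℝ)| ≤ ((x:ℝ)+(a+1))^1 := by
      rw [pow_one, abs_of_nonneg (by positivity)]; linarith
    have h2 : |cc a n (x-1)| ≤ ((x:ℝ)+(a+1))^n := by
      refine (cc_bound a ha.le n (x-1)).trans (pow_le_pow_left₀ (by positivity) ?_ n)
      have : ((x-1 : ℕ):ℝ) ≤ (x:ℝ) := by exact_mod_cast Nat.sub_le x 1
      linarith
    have h3 : |cc a (m+1) x| ≤ ((x:ℝ)+(a+1))^(m+1) := by
      refine (cc_bound a ha.le (m+1) x).trans (pow_le_pow_left₀ (by positivity) (by linarith) _)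
    calc |(x:ℝ)| * |cc a n (x-1)| * |cc a (m+1) x|
        ≤ (((x:ℝ)+(a+1))^1 * ((x:ℝ)+(a+1))^n) * ((x:ℝ)+(a+1))^(m+1) := by
          apply mul_le_mul _ h3 (abs_nonneg _) (by positivity)
          exact mul_le_mul h1 h2 (abs_nonneg _) (by positivity)
      _ = ((x:ℝ)+(a+1))^(n+m+2) := by rw [← pow_add, ← pow_add]; ring_nf
  have hbase := summable_ccw a ha n (m+1)
  have hterm : ∀ x : ℕ, cc a (n+1) x * cc a (m+1) x * ww a x
      = ((x:ℝ) * cc a n (x-1)) * cc a (m+1) x * ww a x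
        - a * (cc a n x * cc a (m+1) x * ww a x) := by
    intro x
    rw [cc_raise a n x]
    ring
  rw [tsum_congr hterm, Summable.tsum_sub hG ((summable_ccw a ha n (m+1)).mul_left a)]
  rw [tsum_mul_left (a := a)]
  -- compute tsum G via shift
  rw [Summable.tsum_eq_zero_add hG]
  have hG0 : ((0:ℕ):ℝ) * cc a n (0-1) * cc a (m+1) 0 * ww a 0 = 0 := by
    norm_num
  rw [hG0, zero_add]
  have hGsh : ∀ y : ℕ, (((y+1:ℕ):ℝ) * cc a n ((y+1)-1)) * cc a (m+1) (y+1) * ww a (y+1)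
      = a * (cc a n y * cc a (m+1) y * ww a y)
        + a * ((m:ℝ)+1) * (cc a n y * cc a m y * ww a y) := by
    intro y
    have hws := ww_shift a y
    simp only [Nat.add_sub_cancel]
    rw [cc_delta a m y]
    push_cast
    linear_combination (cc a n y * (cc a (m+1) y + ((m:ℝ)+1) * cc a m y)) * hws
  rw [tsum_congr hGsh]
  rw [Summable.tsum_add ((summable_ccw a ha n (m+1)).mul_left a)
    ((summable_ccw a ha n m).mul_left _)]
  rw [tsum_mul_left (a := a), tsum_mul_left (a := a * ((m:ℝ)+1))]
  ring


lemma tsum_ortho (a : ℝ) (ha : 0 < a) : ∀ n m : ℕ,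
    ∑' x : ℕ, cc a n x * cc a m x * ww a x
      = if n = m then (n.factorial : ℝ) * a^n else 0 := by
  intro n
  induction n with
  | zero =>
      intro m
      have h : ∀ x : ℕ, cc a 0 x * cc a m x * ww a x = cc a m x * ww a x := by
        intro x; rw [cc_zero]; ring
      rw [tsum_congr h, mom0 a ha m]
      rcases m with _ | q
      · simp
      · simp
  | succ n ih =>
      intro m
      rcases m with _ | q
      · have h : ∀ x : ℕ, cc a (n+1) x * cc a 0 x * ww a x = cc a (n+1) x * ww a x := by
          intro x; rw [cc_zero]; ring
        rw [tsum_congr h, mom0 a ha (n+1)]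
        simp
      · rw [tsum_step a ha n q, ih q]
        by_cases hnq : n = q
        · subst hnq
          rw [if_pos rfl, if_pos rfl]
          rw [Nat.factorial_succ]
          push_cast
          ring
        · rw [if_neg hnq, if_neg (by omega)]
          ring

lemma C_eq (a : ℝ) (ha : 0 < a) (C : ℕ → ℕ → ℝ)
    (hC0 : ∀ x : ℕ, C 0 x = 1)
    (hC1 : ∀ x : ℕ, C 1 x = (a - x) / Real.sqrt a)
    (hCrec : ∀ n : ℕ, 1 ≤ n → ∀ x : ℕ,
      C (n + 1) x = ((n + a - x) / Real.sqrt (a * (n + 1))) * C n x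
        - Real.sqrt ((n : ℝ) / (n + 1)) * C (n - 1) x) :
    ∀ n x, C n x = (-1)^n * cc a n x / Real.sqrt ((n.factorial : ℝ) * a^n) := by
  have hs : ∀ k : ℕ, 0 < Real.sqrt ((k.factorial : ℝ) * a^k) := by
    intro k; apply Real.sqrt_pos.mpr; positivity
  have key : ∀ n : ℕ,
      (∀ x, C n x = (-1)^n * cc a n x / Real.sqrt ((n.factorial : ℝ) * a^n)) ∧
      (∀ x, C (n+1) x = (-1)^(n+1) * cc a (n+1) x
        / Real.sqrt (((n+1).factorial : ℝ) * a^(n+1))) := by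
    intro n
    induction n with
    | zero =>
        constructor
        · intro x
          rw [hC0, cc_zero]
          norm_num
        · intro x
          rw [hC1, cc_one]
          norm_num
    | succ n ih =>
        obtain ⟨ih1, ih2⟩ := ih
        refine ⟨ih2, fun x => ?_⟩
        have hrec := hCrec (n+1) (by omega) x
        have hccrec := cc_rec a (n+1) (by omega) x
        simp only [Nat.add_sub_cancel] at hrec hccrec
        rw [hrec, ih2 x, ih1 x]
        have hnn : n + 1 + 1 = n + 2 := rfl
        rw [hnn]
        push_cast at hccrec ⊢
        -- abbreviations
        set s0 := Real.sqrt ((n.factorial : ℝ) * a^n) with hs0def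
        set s1 := Real.sqrt (((n+1).factorial : ℝ) * a^(n+1)) with hs1def
        set s2 := Real.sqrt (((n+2).factorial : ℝ) * a^(n+2)) with hs2def
        have hq : (0:ℝ) < Real.sqrt (a * ((n:ℝ)+1+1)) := Real.sqrt_pos.mpr (by positivity)
        have hr : (0:ℝ) ≤ Real.sqrt (((n:ℝ)+1)/((n:ℝ)+1+1)) := Real.sqrt_nonneg _
        have fact1 : Real.sqrt (a * ((n:ℝ)+1+1)) * s1 = s2 := by
          rw [hs1def, hs2def, ← Real.sqrt_mul (by positivity)]
          congr 1
          rw [Nat.factorial_succ (n+1)]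
          push_cast
          ring
        have fact2 : Real.sqrt (((n:ℝ)+1)/((n:ℝ)+1+1)) * s2 = a * ((n:ℝ)+1) * s0 := by
          rw [hs2def, hs0def, ← Real.sqrt_mul (by positivity)]
          have harg : ((n:ℝ)+1)/((n:ℝ)+1+1) * (((n+2).factorial : ℝ) * a^(n+2))
              = (a * ((n:ℝ)+1))^2 * ((n.factorial : ℝ) * a^n) := by
            rw [Nat.factorial_succ (n+1), Nat.factorial_succ n]
            have : ((n:ℝ)+1+1) ≠ 0 := by positivity
            push_cast
            field_simp
            ring
          rw [harg, Real.sqrt_mul (by positivity), Real.sqrt_sq (by positivity)]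
        have hs0 : (0:ℝ) < s0 := hs n
        have hs1 : (0:ℝ) < s1 := hs (n+1)
        have hs2 : (0:ℝ) < s2 := hs (n+2)
        have t1 : ((n:ℝ)+1+a-(x:ℝ))/Real.sqrt (a * ((n:ℝ)+1+1))
              * ((-1:ℝ)^(n+1) * cc a (n+1) x / s1)
            = (-1:ℝ)^(n+1) * (((n:ℝ)+1+a-(x:ℝ)) * cc a (n+1) x) / s2 := by
          rw [← fact1]
          field_simp
        have hrval : Real.sqrt (((n:ℝ)+1)/((n:ℝ)+1+1)) = a * ((n:ℝ)+1) * s0 / s2 :=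
          (eq_div_iff hs2.ne').mpr fact2
        have t2 : Real.sqrt (((n:ℝ)+1)/((n:ℝ)+1+1)) * ((-1:ℝ)^n * cc a n x / s0)
            = (-1:ℝ)^n * (a * ((n:ℝ)+1) * cc a n x) / s2 := by
          rw [hrval]
          field_simp
        rw [t1, t2, div_sub_div_same, hccrec]
        congr 1
        rw [pow_succ, pow_succ, pow_succ]
        ring
  intro n x
  exact (key n).1 x



end CharlierAux

theorem stmt_4 (a : ℝ) (ha : 0 < a)
    (w : ℕ → ℝ) (hw : ∀ x : ℕ, w x = Real.exp (-a) * a ^ x / x.factorial)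
    (C : ℕ → ℕ → ℝ)
    (hC0 : ∀ x : ℕ, C 0 x = 1)
    (hC1 : ∀ x : ℕ, C 1 x = (a - x) / Real.sqrt a)
    (hCrec : ∀ n : ℕ, 1 ≤ n → ∀ x : ℕ,
      C (n + 1) x = ((n + a - x) / Real.sqrt (a * (n + 1))) * C n x
        - Real.sqrt ((n : ℝ) / (n + 1)) * C (n - 1) x) :
    ∀ n m : ℕ, Summable (fun x : ℕ => C n x * C m x * w x) ∧
      (∑' x : ℕ, C n x * C m x * w x) = if n = m then 1 else 0 := by
  intro n m
  have hCe := CharlierAux.C_eq a ha C hC0 hC1 hCrec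
  have hs : ∀ k : ℕ, 0 < Real.sqrt ((k.factorial : ℝ) * a^k) := fun k =>
    Real.sqrt_pos.mpr (by positivity)
  set s : ℕ → ℝ := fun k => Real.sqrt ((k.factorial : ℝ) * a^k) with hsdef
  have hfun : (fun x : ℕ => C n x * C m x * w x)
      = fun x : ℕ => ((-1:ℝ)^n * (-1:ℝ)^m / (s n * s m))
          * (CharlierAux.cc a n x * CharlierAux.cc a m x * CharlierAux.ww a x) := by
    funext x
    rw [hCe n x, hCe m x, hw x]
    show _ = _ * (_ * _ * CharlierAux.ww a x)
    rw [CharlierAux.ww, hsdef]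
    ring
  constructor
  · rw [hfun]
    exact (CharlierAux.summable_ccw a ha n m).mul_left _
  · rw [hfun, tsum_mul_left, CharlierAux.tsum_ortho a ha n m]
    by_cases hnm : n = m
    · subst hnm
      rw [if_pos rfl, if_pos rfl]
      have h1 : (-1:ℝ)^n * (-1:ℝ)^n = 1 := by
        rw [← pow_add, Even.neg_one_pow ⟨n, by ring⟩]
      have h2 : s n * s n = (n.factorial : ℝ) * a^n := by
        rw [hsdef]
        exact Real.mul_self_sqrt (by positivity)
      rw [h1, h2]
      field_simp
    · rw [if_neg hnm, if_neg hnm, mul_zero]
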